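/- For any n ≥ 2 and any β ∈ ℂ, the operator R̂ on ℂ^n ⊗ ℂ^n with entries R̂^{ij}_{kl} = (1-β_{ji})δ^i_l δ^j_k + β_{ij}δ^i_k δ^j_l - β_{ij}δ^i_k δ^i_l + β_{ji}δ^j_k δ^j_l (where β_{ii}=0) satisfies the Hecke relation R̂² = β R̂ + (1-β) Id, for arbitrary off-diagonal parameters β_{ij}. -/

import Mathlib

open Matrix Kronecker BigOperators Finset

noncomputable section

/-- The rime matrix R̂ on ℂⁿ⊗ℂⁿ with parameters `b i j = β_{ij}` (form (3) of the paper):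
`R̂^{ij}_{kl} = (1-b_{ji})δ^i_l δ^j_k + b_{ij}δ^i_k δ^j_l - b_{ij}δ^i_k δ^i_l + b_{ji}δ^j_k δ^j_l`.
Row index `p = (i,j)` (upper indices), column index `q = (k,l)` (lower indices). -/
def rimeR (n : ℕ) (b : Fin n → Fin n → ℂ) :
    Matrix (Fin n × Fin n) (Fin n × Fin n) ℂ := fun p q =>
  (1 - b p.2 p.1) * (if p.1 = q.2 then 1 else 0) * (if p.2 = q.1 then 1 else 0)
  + b p.1 p.2 * (if p.1 = q.1 then 1 else 0) * (if p.2 = q.2 then 1 else 0)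
  - b p.1 p.2 * (if p.1 = q.1 then 1 else 0) * (if p.1 = q.2 then 1 else 0)
  + b p.2 p.1 * (if p.2 = q.1 then 1 else 0) * (if p.2 = q.2 then 1 else 0)

/-- `β_{ij} = β φ_i / (φ_i - φ_j)` for `i ≠ j`, and `β_{ii} = 0`. -/
def bphi (n : ℕ) (β : ℂ) (φ : Fin n → ℂ) : Fin n → Fin n → ℂ := fun i j =>
  if i = j then 0 else β * φ i / (φ i - φ j)

/-- Row collapse: `rimeR` rows are supported on `{(j,i),(i,j),(i,i),(j,j)}`. -/
lemma rimeR_row_collapse (n : ℕ) (b : Fin n → Fin n → ℂ) (i j : Fin n)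
    (g : Fin n × Fin n → ℂ) :
    ∑ r : Fin n × Fin n, rimeR n b (i, j) r * g r
      = (1 - b j i) * g (j, i) + b i j * g (i, j) - b i j * g (i, i) + b j i * g (j, j) := by
  simp only [rimeR, Fintype.sum_prod_type]
  simp [ite_mul, mul_ite, add_mul, sub_mul, Finset.sum_add_distrib, Finset.sum_sub_distrib,
    Finset.sum_ite_eq, Finset.sum_ite_eq']

/-- The rime matrix (3) satisfies the Hecke relation `R̂² = β R̂ + (1-β) Id`,
for arbitrary off-diagonal parameters `b i j = β_{ij}` with constant `β_{ij}+β_{ji} = β`. -/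
theorem rime_hecke (n : ℕ) (hn : 2 ≤ n) (β : ℂ) (b : Fin n → Fin n → ℂ)
    (hdiag : ∀ i, b i i = 0) (hsum : ∀ i j, i ≠ j → b i j + b j i = β) :
    rimeR n b * rimeR n b = β • rimeR n b + (1 - β) • (1 : Matrix (Fin n × Fin n) (Fin n × Fin n) ℂ) := by
  ext ⟨i, j⟩ ⟨k, l⟩
  rw [Matrix.mul_apply]
  rw [rimeR_row_collapse n b i j (fun r => rimeR n b r (k, l))]
  simp only [Matrix.add_apply, Matrix.smul_apply, Matrix.one_apply, Prod.mk.injEq, smul_eq_mul,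
    rimeR, Prod.ext_iff]
  by_cases hij : i = j
  · subst hij
    simp only [hdiag, if_pos rfl]
    split_ifs <;>
      first
      | ring1
      | (exfalso; subst_vars; simp_all)
      | (exfalso; omega)
      | (subst_vars; ring1)
  · have hb : b j i = β - b i j := by linear_combination hsum i j hij
    rw [hb]
    simp only [hdiag]
    split_ifs <;>
      first
      | ring1
      | (exfalso; subst_vars; tauto)
      | (exfalso; subst_vars; simp_all)
      | (exfalso; omega)
      | (subst_vars; ring1)
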